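/- Let H : ℝ → ℝ be continuous and coercive, and let Fa, Fb : ℝ → ℝ be continuous and non-increasing. Then the relaxation operator commutes with pointwise minimum and maximum: ℜ(min(Fa, Fb)) = min(ℜFa, ℜFb) and ℜ(max(Fa, Fb)) = max(ℜFa, ℜFb). -/

import Mathlib

open Set Filter

attribute [local instance] Classical.propDecidable

noncomputable section

/-- `H` is coercive: `H p → +∞` as `|p| → +∞`. -/
def Coercive (H : ℝ → ℝ) : Prop := Tendsto H (cocompact ℝ) atTop

/-- `F` is semi-coercive: `F p → +∞` as `p → -∞`. -/
def SemiCoercive (F : ℝ → ℝ) : Prop := Tendsto F atBot atTop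

/-- Sub-relaxation: `(R̲F)(p) = sup_{q ≥ p} min (F q) (H q)`. -/
def subR (H F : ℝ → ℝ) (p : ℝ) : ℝ := sSup ((fun q => min (F q) (H q)) '' Ici p)

/-- Super-relaxation: `(R̄F)(p) = inf_{q ≤ p} max (F q) (H q)`. -/
def supR (H F : ℝ → ℝ) (p : ℝ) : ℝ := sInf ((fun q => max (F q) (H q)) '' Iic p)

/-- Relaxation operator: `R̲F` where `F ≥ H`, `R̄F` where `F ≤ H`. -/
def relax (H F : ℝ → ℝ) (p : ℝ) : ℝ := if H p ≤ F p then subR H F p else supR H F p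

/-- `p` is a negative characteristic point of `F` relative to `H`. -/
def negChar (H F : ℝ → ℝ) (p : ℝ) : Prop :=
  H p = F p ∧ ∃ ε > 0, ∀ q ∈ Ioo (p - ε) p, H q < H p

/-- `p` is a positive characteristic point of `F` relative to `H`. -/
def posChar (H F : ℝ → ℝ) (p : ℝ) : Prop :=
  H p = F p ∧ ∃ ε > 0, ∀ q ∈ Ioo p (p + ε), H p < H q

/-- The upper point `p⁺ ∈ ℝ ∪ {+∞}` associated with `p` and `H`. -/
def upperPt (H : ℝ → ℝ) (p : ℝ) : EReal :=
  if ∀ ε > 0, ∃ q, p < q ∧ q < p + ε ∧ H q ≤ H p then (p : EReal)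
  else sSup ((fun q : ℝ => (q : EReal)) '' {q : ℝ | p < q ∧ ∀ r ∈ Ioo p q, H p < H r})

/-- The lower point `p⁻` associated with `p` and `H`. -/
def lowerPt (H : ℝ → ℝ) (p : ℝ) : ℝ :=
  if ∀ ε > 0, ∃ q, p - ε < q ∧ q < p ∧ H p ≤ H q then p
  else sInf {q : ℝ | q < p ∧ ∀ r ∈ Ioo q p, H r < H p}

/-- `p` is a positive limiter point of `F`. -/
def posLimiter (H F : ℝ → ℝ) (p : ℝ) : Prop :=
  (p : EReal) < upperPt H p ∧ F p ≤ H p ∧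
    ∀ q : ℝ, H q < H p → F q ≤ H q →
      {r : ℝ | lowerPt H q < r ∧ (r : EReal) < upperPt H q} ∩
        {r : ℝ | p < r ∧ (r : EReal) < upperPt H p} = ∅

/-- `p` is a negative limiter point of `F`. -/
def negLimiter (H F : ℝ → ℝ) (p : ℝ) : Prop :=
  lowerPt H p < p ∧ H p ≤ F p ∧
    ∀ q : ℝ, H q ≤ F q → H p < H q →
      {r : ℝ | lowerPt H q < r ∧ (r : EReal) < upperPt H q} ∩ Ioo (lowerPt H p) p = ∅

/-- The Godunov flux associated with `H`. -/
def godunov (H : ℝ → ℝ) (q p : ℝ) : ℝ :=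
  if p ≤ q then sSup (H '' Icc p q) else sInf (H '' Icc q p)

/-- The lower (set-valued) Godunov semi-flux `G̲(q,p)`, as a subset of the extended reals. -/
def subG (H : ℝ → ℝ) (q p : ℝ) : Set EReal :=
  if q < p then {⊥}
  else if q = p then Iic ((H p : ℝ) : EReal)
  else {((godunov H q p : ℝ) : EReal)}

/-- The upper (set-valued) Godunov semi-flux `Ḡ(q,p)`, as a subset of the extended reals. -/
def supG (H : ℝ → ℝ) (q p : ℝ) : Set EReal :=
  if q < p then {((godunov H q p : ℝ) : EReal)}
  else if q = p then Ici ((H p : ℝ) : EReal)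
  else {⊤}


section Aux

variable {H F Fa Fb : ℝ → ℝ} {p : ℝ}

lemma subR_ne (H F : ℝ → ℝ) (p : ℝ) : ((fun q => min (F q) (H q)) '' Ici p).Nonempty :=
  ⟨_, ⟨p, self_mem_Ici, rfl⟩⟩

lemma subR_bdd (hF : Antitone F) (p : ℝ) :
    BddAbove ((fun q => min (F q) (H q)) '' Ici p) := by
  refine ⟨F p, ?_⟩
  rintro x ⟨q, hq, rfl⟩
  exact le_trans (min_le_left _ _) (hF hq)

lemma supR_ne (H F : ℝ → ℝ) (p : ℝ) : ((fun q => max (F q) (H q)) '' Iic p).Nonempty :=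
  ⟨_, ⟨p, self_mem_Iic, rfl⟩⟩

lemma supR_bdd (hF : Antitone F) (p : ℝ) :
    BddBelow ((fun q => max (F q) (H q)) '' Iic p) := by
  refine ⟨F p, ?_⟩
  rintro x ⟨q, hq, rfl⟩
  exact le_trans (hF hq) (le_max_left _ _)

lemma subR_le_self (hF : Antitone F) : subR H F p ≤ F p :=
  csSup_le (subR_ne H F p) (by rintro x ⟨q, hq, rfl⟩; exact le_trans (min_le_left _ _) (hF hq))

lemma min_le_subR (hF : Antitone F) : min (F p) (H p) ≤ subR H F p :=
  le_csSup (subR_bdd hF p) ⟨p, self_mem_Ici, rfl⟩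

lemma self_le_supR (hF : Antitone F) : F p ≤ supR H F p :=
  le_csInf (supR_ne H F p) (by rintro x ⟨q, hq, rfl⟩; exact le_trans (hF hq) (le_max_left _ _))

lemma supR_le_max (hF : Antitone F) : supR H F p ≤ max (F p) (H p) :=
  csInf_le (supR_bdd hF p) ⟨p, self_mem_Iic, rfl⟩

lemma subR_eq_self (hF : Antitone F) (h : F p ≤ H p) : subR H F p = F p := by
  refine le_antisymm (subR_le_self hF) ?_
  have := min_le_subR (H := H) (p := p) hF
  rwa [min_eq_left h] at this

lemma supR_eq_self (hF : Antitone F) (h : H p ≤ F p) : supR H F p = F p := by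
  refine le_antisymm ?_ (self_le_supR hF)
  have := supR_le_max (H := H) (p := p) hF
  rwa [max_eq_left h] at this

lemma le_subR' (hF : Antitone F) (h : H p ≤ F p) : H p ≤ subR H F p := by
  have := min_le_subR (H := H) (p := p) hF
  rwa [min_eq_right h] at this

lemma supR_le' (hF : Antitone F) (h : F p ≤ H p) : supR H F p ≤ H p := by
  have := supR_le_max (H := H) (p := p) hF
  rwa [max_eq_right h] at this

lemma subR_attained (hH : Continuous H) (hHc : Coercive H) (hFc : Continuous F)
    (hF : Antitone F) (p : ℝ) :
    ∃ q, p ≤ q ∧ subR H F p = min (F q) (H q) := by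
  have hTop : Tendsto H atTop atTop := by
    rw [Coercive, cocompact_eq_atBot_atTop] at hHc
    exact hHc.mono_left le_sup_right
  obtain ⟨Q₀, hQ₀⟩ := eventually_atTop.mp (hTop.eventually (eventually_ge_atTop (F p)))
  set Q := max p Q₀ with hQdef
  obtain ⟨q, hqmem, hqmax⟩ := (isCompact_Icc (a := p) (b := Q)).exists_isMaxOn
    ⟨p, le_refl p, le_max_left _ _⟩ ((hFc.min hH).continuousOn)
  refine ⟨q, hqmem.1, ?_⟩
  apply IsGreatest.csSup_eq
  refine ⟨⟨q, hqmem.1, rfl⟩, ?_⟩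
  rintro x ⟨r, hr, rfl⟩
  rcases le_total r Q with h | h
  · exact hqmax ⟨hr, h⟩
  · have h2 : F Q ≤ H Q := le_trans (hF (le_max_left p Q₀)) (hQ₀ Q (le_max_right _ _))
    calc min (F r) (H r) ≤ F r := min_le_left _ _
      _ ≤ F Q := hF h
      _ = min (F Q) (H Q) := (min_eq_left h2).symm
      _ ≤ _ := hqmax ⟨le_max_left _ _, le_refl Q⟩

lemma supR_attained (hH : Continuous H) (hHc : Coercive H) (hFc : Continuous F)
    (hF : Antitone F) (p : ℝ) :
    ∃ q, q ≤ p ∧ supR H F p = max (F q) (H q) := by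
  have hBot : Tendsto H atBot atTop := by
    rw [Coercive, cocompact_eq_atBot_atTop] at hHc
    exact hHc.mono_left le_sup_left
  obtain ⟨Q₀, hQ₀⟩ := eventually_atBot.mp (hBot.eventually (eventually_ge_atTop (max (F p) (H p))))
  set Q := min p Q₀ with hQdef
  obtain ⟨q, hqmem, hqmin⟩ := (isCompact_Icc (a := Q) (b := p)).exists_isMinOn
    ⟨p, min_le_left _ _, le_refl p⟩ ((hFc.max hH).continuousOn)
  refine ⟨q, hqmem.2, ?_⟩
  apply IsLeast.csInf_eq
  refine ⟨⟨q, hqmem.2, rfl⟩, ?_⟩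
  rintro x ⟨r, hr, rfl⟩
  rcases le_total Q r with h | h
  · exact hqmin ⟨h, hr⟩
  · calc max (F q) (H q) ≤ max (F p) (H p) := hqmin ⟨min_le_left _ _, le_refl p⟩
      _ ≤ H r := hQ₀ r (h.trans (min_le_right _ _))
      _ ≤ max (F r) (H r) := le_max_right _ _

lemma key_min (hFb : Antitone Fb) {qa qb Sa Sb : ℝ} (hab : qa ≤ qb)
    (ha : Sa = min (Fa qa) (H qa)) (hb : Sb = min (Fb qb) (H qb)) :
    min Sa Sb ≤ min (min (Fa qa) (Fb qa)) (H qa) := by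
  refine le_min (le_min ?_ ?_) ?_
  · exact (min_le_left _ _).trans (ha.trans_le (min_le_left _ _))
  · exact (min_le_right _ _).trans (hb.trans_le ((min_le_left _ _).trans (hFb hab)))
  · exact (min_le_left _ _).trans (ha.trans_le (min_le_right _ _))

lemma key_max (hFb : Antitone Fb) {qa qb Sa Sb : ℝ} (hab : qb ≤ qa)
    (ha : Sa = max (Fa qa) (H qa)) (hb : Sb = max (Fb qb) (H qb)) :
    max (max (Fa qa) (Fb qa)) (H qa) ≤ max Sa Sb := by
  refine max_le (max_le ?_ ?_) ?_
  · exact ((le_max_left _ _).trans_eq ha.symm).trans (le_max_left _ _)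
  · exact ((hFb hab).trans ((le_max_left _ _).trans_eq hb.symm)).trans (le_max_right _ _)
  · exact ((le_max_right _ _).trans_eq ha.symm).trans (le_max_left _ _)

lemma subR_min_eq (hH : Continuous H) (hHc : Coercive H)
    (hFac : Continuous Fa) (hFaa : Antitone Fa) (hFbc : Continuous Fb) (hFba : Antitone Fb)
    (p : ℝ) :
    subR H (fun x => min (Fa x) (Fb x)) p = min (subR H Fa p) (subR H Fb p) := by
  have hFm : Antitone fun x => min (Fa x) (Fb x) := hFaa.min hFba
  apply le_antisymm
  · apply csSup_le (subR_ne _ _ p)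
    rintro x ⟨q, hq, rfl⟩
    refine le_min ?_ ?_
    · exact le_trans (min_le_min (min_le_left _ _) le_rfl) (le_csSup (subR_bdd hFaa p) ⟨q, hq, rfl⟩)
    · exact le_trans (min_le_min (min_le_right _ _) le_rfl) (le_csSup (subR_bdd hFba p) ⟨q, hq, rfl⟩)
  · obtain ⟨qa, hpa, ha⟩ := subR_attained hH hHc hFac hFaa p
    obtain ⟨qb, hpb, hb⟩ := subR_attained hH hHc hFbc hFba p
    rcases le_total qa qb with h | h
    · exact (key_min hFba h ha hb).trans (le_csSup (subR_bdd hFm p) ⟨qa, hpa, rfl⟩)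
    · have hk := key_min hFaa h hb ha
      rw [min_comm (subR H Fa p)]
      refine hk.trans ?_
      have hmem : min (min (Fa qb) (Fb qb)) (H qb) ∈
          (fun q => min (min (Fa q) (Fb q)) (H q)) '' Ici p := ⟨qb, hpb, rfl⟩
      rw [min_comm (Fb qb) (Fa qb)]
      exact le_csSup (subR_bdd hFm p) hmem

lemma supR_max_eq (hH : Continuous H) (hHc : Coercive H)
    (hFac : Continuous Fa) (hFaa : Antitone Fa) (hFbc : Continuous Fb) (hFba : Antitone Fb)
    (p : ℝ) :
    supR H (fun x => max (Fa x) (Fb x)) p = max (supR H Fa p) (supR H Fb p) := by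
  have hFm : Antitone fun x => max (Fa x) (Fb x) := hFaa.max hFba
  apply le_antisymm
  · obtain ⟨qa, hpa, ha⟩ := supR_attained hH hHc hFac hFaa p
    obtain ⟨qb, hpb, hb⟩ := supR_attained hH hHc hFbc hFba p
    rcases le_total qb qa with h | h
    · exact (csInf_le (supR_bdd hFm p) ⟨qa, hpa, rfl⟩).trans (key_max hFba h ha hb)
    · have hk := key_max hFaa h hb ha
      rw [max_comm (supR H Fa p)]
      refine le_trans ?_ hk
      have hmem : max (max (Fa qb) (Fb qb)) (H qb) ∈
          (fun q => max (max (Fa q) (Fb q)) (H q)) '' Iic p := ⟨qb, hpb, rfl⟩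
      rw [max_comm (Fb qb) (Fa qb)]
      exact csInf_le (supR_bdd hFm p) hmem
  · refine max_le ?_ ?_
    · refine le_csInf (supR_ne _ _ p) ?_
      rintro x ⟨q, hq, rfl⟩
      exact (csInf_le (supR_bdd hFaa p) ⟨q, hq, rfl⟩).trans
        (max_le_max (le_max_left _ _) le_rfl)
    · refine le_csInf (supR_ne _ _ p) ?_
      rintro x ⟨q, hq, rfl⟩
      exact (csInf_le (supR_bdd hFba p) ⟨q, hq, rfl⟩).trans
        (max_le_max (le_max_right _ _) le_rfl)

lemma supR_min_eq (hFaa : Antitone Fa) (hFba : Antitone Fb) (p : ℝ) :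
    supR H (fun x => min (Fa x) (Fb x)) p = min (supR H Fa p) (supR H Fb p) := by
  have hFm : Antitone fun x => min (Fa x) (Fb x) := hFaa.min hFba
  apply le_antisymm
  · refine le_min ?_ ?_
    · refine le_csInf (supR_ne _ _ p) ?_
      rintro x ⟨q, hq, rfl⟩
      exact (csInf_le (supR_bdd hFm p) ⟨q, hq, rfl⟩).trans
        (max_le_max (min_le_left _ _) le_rfl)
    · refine le_csInf (supR_ne _ _ p) ?_
      rintro x ⟨q, hq, rfl⟩
      exact (csInf_le (supR_bdd hFm p) ⟨q, hq, rfl⟩).trans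
        (max_le_max (min_le_right _ _) le_rfl)
  · refine le_csInf (supR_ne _ _ p) ?_
    rintro x ⟨q, hq, rfl⟩
    rcases le_total (Fa q) (Fb q) with h | h
    · calc min (supR H Fa p) (supR H Fb p) ≤ supR H Fa p := min_le_left _ _
        _ ≤ max (Fa q) (H q) := csInf_le (supR_bdd hFaa p) ⟨q, hq, rfl⟩
        _ = max (min (Fa q) (Fb q)) (H q) := by rw [min_eq_left h]
    · calc min (supR H Fa p) (supR H Fb p) ≤ supR H Fb p := min_le_right _ _
        _ ≤ max (Fb q) (H q) := csInf_le (supR_bdd hFba p) ⟨q, hq, rfl⟩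
        _ = max (min (Fa q) (Fb q)) (H q) := by rw [min_eq_right h]

lemma subR_max_eq (hFaa : Antitone Fa) (hFba : Antitone Fb) (p : ℝ) :
    subR H (fun x => max (Fa x) (Fb x)) p = max (subR H Fa p) (subR H Fb p) := by
  have hFm : Antitone fun x => max (Fa x) (Fb x) := hFaa.max hFba
  apply le_antisymm
  · refine csSup_le (subR_ne _ _ p) ?_
    rintro x ⟨q, hq, rfl⟩
    rcases le_total (Fa q) (Fb q) with h | h
    · calc min (max (Fa q) (Fb q)) (H q) = min (Fb q) (H q) := by rw [max_eq_right h]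
        _ ≤ subR H Fb p := le_csSup (subR_bdd hFba p) ⟨q, hq, rfl⟩
        _ ≤ max (subR H Fa p) (subR H Fb p) := le_max_right _ _
    · calc min (max (Fa q) (Fb q)) (H q) = min (Fa q) (H q) := by rw [max_eq_left h]
        _ ≤ subR H Fa p := le_csSup (subR_bdd hFaa p) ⟨q, hq, rfl⟩
        _ ≤ max (subR H Fa p) (subR H Fb p) := le_max_left _ _
  · refine max_le ?_ ?_
    · refine csSup_le (subR_ne _ _ p) ?_
      rintro x ⟨q, hq, rfl⟩
      exact le_trans (min_le_min (le_max_left _ _) le_rfl)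
        (le_csSup (subR_bdd hFm p) ⟨q, hq, rfl⟩)
    · refine csSup_le (subR_ne _ _ p) ?_
      rintro x ⟨q, hq, rfl⟩
      exact le_trans (min_le_min (le_max_right _ _) le_rfl)
        (le_csSup (subR_bdd hFm p) ⟨q, hq, rfl⟩)

end Aux

/-- Commutation of max/min with the relaxation operator `ℜ`. -/
theorem relax_commutes_with_min_max (H Fa Fb : ℝ → ℝ)
    (hH : Continuous H) (hHc : Coercive H)
    (hFac : Continuous Fa) (hFaa : Antitone Fa)
    (hFbc : Continuous Fb) (hFba : Antitone Fb) :
    (relax H (fun p => min (Fa p) (Fb p)) = fun p => min (relax H Fa p) (relax H Fb p)) ∧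
    (relax H (fun p => max (Fa p) (Fb p)) = fun p => max (relax H Fa p) (relax H Fb p)) := by
  constructor
  · funext p
    simp only [relax]
    by_cases ha : H p ≤ Fa p <;> by_cases hb : H p ≤ Fb p
    · rw [if_pos (le_min ha hb), if_pos ha, if_pos hb]
      exact subR_min_eq hH hHc hFac hFaa hFbc hFba p
    · rw [if_neg (fun hc => hb ((le_min_iff.mp hc).2)), if_pos ha, if_neg hb]
      rw [supR_min_eq hFaa hFba p]
      have h1 : supR H Fa p = Fa p := supR_eq_self hFaa ha
      have h2 : supR H Fb p ≤ H p := supR_le' hFba (le_of_not_ge hb)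
      have h3 : H p ≤ subR H Fa p := le_subR' hFaa ha
      rw [h1, min_eq_right (h2.trans ha), min_eq_right (h2.trans h3)]
    · rw [if_neg (fun hc => ha ((le_min_iff.mp hc).1)), if_neg ha, if_pos hb]
      rw [supR_min_eq hFaa hFba p]
      have h1 : supR H Fb p = Fb p := supR_eq_self hFba hb
      have h2 : supR H Fa p ≤ H p := supR_le' hFaa (le_of_not_ge ha)
      have h3 : H p ≤ subR H Fb p := le_subR' hFba hb
      rw [h1, min_eq_left (h2.trans hb), min_eq_left (h2.trans h3)]
    · rw [if_neg (fun hc => ha ((le_min_iff.mp hc).1)), if_neg ha, if_neg hb]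
      exact supR_min_eq hFaa hFba p
  · funext p
    simp only [relax]
    by_cases ha : H p ≤ Fa p <;> by_cases hb : H p ≤ Fb p
    · rw [if_pos (ha.trans (le_max_left _ _)), if_pos ha, if_pos hb]
      exact subR_max_eq hFaa hFba p
    · rw [if_pos (ha.trans (le_max_left _ _)), if_pos ha, if_neg hb]
      rw [subR_max_eq hFaa hFba p]
      have h2 : subR H Fb p ≤ H p := (subR_le_self hFba).trans (le_of_not_ge hb)
      have h2' : supR H Fb p ≤ H p := supR_le' hFba (le_of_not_ge hb)
      have h3 : H p ≤ subR H Fa p := le_subR' hFaa ha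
      rw [max_eq_left (h2.trans h3), max_eq_left (h2'.trans h3)]
    · rw [if_pos (hb.trans (le_max_right _ _)), if_neg ha, if_pos hb]
      rw [subR_max_eq hFaa hFba p]
      have h2 : subR H Fa p ≤ H p := (subR_le_self hFaa).trans (le_of_not_ge ha)
      have h2' : supR H Fa p ≤ H p := supR_le' hFaa (le_of_not_ge ha)
      have h3 : H p ≤ subR H Fb p := le_subR' hFba hb
      rw [max_eq_right (h2.trans h3), max_eq_right (h2'.trans h3)]
    · rw [if_neg (fun hc => (max_lt (not_le.mp ha) (not_le.mp hb)).not_ge hc),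
        if_neg ha, if_neg hb]
      exact supR_max_eq hH hHc hFac hFaa hFbc hFba p
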